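/- Let F be a finitely generated free abelian group and p, q ∈ ℚ[t,t⁻¹] nonzero and strongly coprime. Then for any nontrivial elements a, b ∈ F, the elements p(a) and q(b) of the group algebra ℚF (a unique factorization domain, being a Laurent polynomial ring) are relatively prime. -/

import Mathlib

open Finsupp


section Slice

variable {G : Type*} [AddCommGroup G]

/-- In a product in a group algebra (over a domain), the top degree with respect to an
additive functional `φ` is attained. -/
lemma top_attained [NoZeroDivisors (AddMonoidAlgebra ℚ G)]
    (x y : AddMonoidAlgebra ℚ G) (φ : G →+ ℤ) (M M' : ℤ)
    (hxM : ∀ g ∈ x.coeff.support, φ g ≤ M) (hyM : ∀ g ∈ y.coeff.support, φ g ≤ M')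
    (hxmem : ∃ g ∈ x.coeff.support, φ g = M) (hymem : ∃ g ∈ y.coeff.support, φ g = M') :
    ∃ h ∈ (x * y).coeff.support, φ h = M + M' := by
  classical
  set xt : AddMonoidAlgebra ℚ G := AddMonoidAlgebra.ofCoeff (x.coeff.filter (fun g => φ g = M)) with hxtdef
  set yt : AddMonoidAlgebra ℚ G := AddMonoidAlgebra.ofCoeff (y.coeff.filter (fun g => φ g = M')) with hytdef
  have hxt0 : xt ≠ 0 := by
    obtain ⟨g, hg, hgM⟩ := hxmem
    intro h0
    have h1 : xt.coeff g = x.coeff g := Finsupp.filter_apply_pos _ _ hgM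
    rw [h0] at h1
    exact Finsupp.mem_support_iff.mp hg (by simpa using h1.symm)
  have hyt0 : yt ≠ 0 := by
    obtain ⟨g, hg, hgM⟩ := hymem
    intro h0
    have h1 : yt.coeff g = y.coeff g := Finsupp.filter_apply_pos _ _ hgM
    rw [h0] at h1
    exact Finsupp.mem_support_iff.mp hg (by simpa using h1.symm)
  have hne : xt * yt ≠ 0 := mul_ne_zero hxt0 hyt0
  obtain ⟨h, hh⟩ := Finsupp.support_nonempty_iff.mpr (mt AddMonoidAlgebra.coeff_eq_zero.mp hne)
  have hmem2 := AddMonoidAlgebra.support_coeff_mul_subset xt yt hh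
  rw [Finset.mem_add] at hmem2
  obtain ⟨g1, hg1, g2, hg2, rfl⟩ := hmem2
  rw [hxtdef, AddMonoidAlgebra.coeff_ofCoeff, Finsupp.support_filter, Finset.mem_filter] at hg1
  rw [hytdef, AddMonoidAlgebra.coeff_ofCoeff, Finsupp.support_filter, Finset.mem_filter] at hg2
  have hφh : φ (g1 + g2) = M + M' := by rw [map_add, hg1.2, hg2.2]
  refine ⟨g1 + g2, ?_, hφh⟩
  rw [Finsupp.mem_support_iff]
  have key : (x * y).coeff (g1 + g2) = (xt * yt).coeff (g1 + g2) := by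
    rw [AddMonoidAlgebra.coeff_mul, AddMonoidAlgebra.coeff_mul]
    have hxs : xt.coeff.support ⊆ x.coeff.support := by
      rw [hxtdef, AddMonoidAlgebra.coeff_ofCoeff, Finsupp.support_filter]; exact Finset.filter_subset _ _
    have hys : yt.coeff.support ⊆ y.coeff.support := by
      rw [hytdef, AddMonoidAlgebra.coeff_ofCoeff, Finsupp.support_filter]; exact Finset.filter_subset _ _
    rw [Finsupp.sum_of_support_subset x.coeff (le_refl x.coeff.support) _ (fun i _ => by simp),
        Finsupp.sum_of_support_subset xt.coeff hxs _ (fun i _ => by simp)]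
    refine Finset.sum_congr rfl fun a1 ha1 => ?_
    rw [Finsupp.sum_of_support_subset y.coeff (le_refl y.coeff.support) _ (fun i _ => by simp),
        Finsupp.sum_of_support_subset yt.coeff hys _ (fun i _ => by simp)]
    refine Finset.sum_congr rfl fun a2 ha2 => ?_
    by_cases hsum : a1 + a2 = g1 + g2
    · have h1 : φ a1 + φ a2 = M + M' := by
        rw [← map_add, hsum, hφh]
      have h2 : φ a1 ≤ M := hxM a1 ha1
      have h3 : φ a2 ≤ M' := hyM a2 ha2
      have h4 : φ a1 = M := by omega
      have h5 : φ a2 = M' := by omega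
      simp [hxtdef, hytdef, AddMonoidAlgebra.coeff_ofCoeff, Finsupp.filter_apply, hsum, h4, h5]
    · rw [if_neg hsum, if_neg hsum]
  rw [key]
  exact Finsupp.mem_support_iff.mp hh

/-- A factor of a `φ`-homogeneous element of a group algebra is `φ`-homogeneous. -/
lemma const_on_support [NoZeroDivisors (AddMonoidAlgebra ℚ G)]
    {x y : AddMonoidAlgebra ℚ G} (hx : x ≠ 0) (hy : y ≠ 0) (φ : G →+ ℤ) {c : ℤ}
    (hc : ∀ g ∈ (x * y).coeff.support, φ g = c) :
    ∃ m, ∀ g ∈ x.coeff.support, φ g = m := by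
  classical
  have hxs : x.coeff.support.Nonempty := Finsupp.support_nonempty_iff.mpr (mt AddMonoidAlgebra.coeff_eq_zero.mp hx)
  have hys : y.coeff.support.Nonempty := Finsupp.support_nonempty_iff.mpr (mt AddMonoidAlgebra.coeff_eq_zero.mp hy)
  set Mx := (x.coeff.support.image φ).max' (hxs.image φ) with hMx
  set My := (y.coeff.support.image φ).max' (hys.image φ) with hMy
  set Nx := (x.coeff.support.image (fun g => -φ g)).max' (hxs.image _) with hNx
  set Ny := (y.coeff.support.image (fun g => -φ g)).max' (hys.image _) with hNy
  have hMxle : ∀ g ∈ x.coeff.support, φ g ≤ Mx := fun g hg =>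
    Finset.le_max' _ _ (Finset.mem_image_of_mem φ hg)
  have hMyle : ∀ g ∈ y.coeff.support, φ g ≤ My := fun g hg =>
    Finset.le_max' _ _ (Finset.mem_image_of_mem φ hg)
  have hNxle : ∀ g ∈ x.coeff.support, (-φ) g ≤ Nx := fun g hg =>
    Finset.le_max' _ _ (Finset.mem_image_of_mem _ hg)
  have hNyle : ∀ g ∈ y.coeff.support, (-φ) g ≤ Ny := fun g hg =>
    Finset.le_max' _ _ (Finset.mem_image_of_mem _ hg)
  obtain ⟨gx, hgx, hgx2⟩ := Finset.mem_image.mp (Finset.max'_mem _ (hxs.image φ))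
  obtain ⟨gy, hgy, hgy2⟩ := Finset.mem_image.mp (Finset.max'_mem _ (hys.image φ))
  obtain ⟨gx', hgx', hgx2'⟩ := Finset.mem_image.mp
    (Finset.max'_mem _ (hxs.image (fun g => -φ g)))
  obtain ⟨gy', hgy', hgy2'⟩ := Finset.mem_image.mp
    (Finset.max'_mem _ (hys.image (fun g => -φ g)))
  obtain ⟨h1, hmem1, hφ1⟩ := top_attained x y φ Mx My hMxle hMyle ⟨gx, hgx, hgx2⟩ ⟨gy, hgy, hgy2⟩
  obtain ⟨h2, hmem2, hφ2⟩ := top_attained x y (-φ) Nx Ny hNxle hNyle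
    ⟨gx', hgx', hgx2'⟩ ⟨gy', hgy', hgy2'⟩
  have e1 : Mx + My = c := by rw [← hφ1]; exact hc _ hmem1
  have e2 : Nx + Ny = -c := by
    have := hc _ hmem2
    have h3 : (-φ) h2 = -c := by simp [this]
    rw [← hφ2, h3]
  have h5 : -Mx ≤ Nx := by
    have := hNxle gx hgx
    simp only [AddMonoidHom.neg_apply] at this
    omega
  have h6 : -My ≤ Ny := by
    have := hNyle gy hgy
    simp only [AddMonoidHom.neg_apply] at this
    omega
  have hNxeq : Nx = -Mx := by omega
  refine ⟨Mx, fun g hg => ?_⟩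
  have u1 := hMxle g hg
  have u2 := hNxle g hg
  simp only [AddMonoidHom.neg_apply] at u2
  omega

end Slice



/-- View a Laurent polynomial over `ℚ` as a finitely supported function `ℤ →₀ ℚ`. -/
def toF (p : LaurentPolynomial ℚ) : ℤ →₀ ℚ := p.coeff

/-- The substitution `t ↦ t^j` on Laurent polynomials over `ℚ`. -/
noncomputable def substPow (j : ℤ) (p : LaurentPolynomial ℚ) : LaurentPolynomial ℚ :=
  AddMonoidAlgebra.ofCoeff (Finsupp.mapDomain (fun i => j * i) (toF p))

/-- View a finitely supported function `F →₀ ℚ` as an element of the group algebra `ℚF`. -/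
def ofFG {F : Type*} [AddCommGroup F] (f : F →₀ ℚ) : AddMonoidAlgebra ℚ F := AddMonoidAlgebra.ofCoeff f

/-- The element `p(a)` of the group algebra `ℚF`: the image of the Laurent polynomial `p`
under `t ↦ a`. -/
noncomputable def substElt {F : Type*} [AddCommGroup F] (a : F) (p : LaurentPolynomial ℚ) :
    AddMonoidAlgebra ℚ F :=
  ofFG (Finsupp.mapDomain (fun z : ℤ => z • a) (toF p))

/-- Let `F` be a finitely generated free abelian group and `p, q ∈ ℚ[t,t⁻¹]` nonzero and
strongly coprime.  Then for any nontrivial `a, b ∈ F`, the elements `p(a)` and `q(b)` of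
the group algebra `ℚF` are relatively prime: any common divisor is a unit. -/
theorem stmt12 {F : Type*} [AddCommGroup F] [Module.Free ℤ F] [Module.Finite ℤ F]
    (p q : LaurentPolynomial ℚ) (hp : p ≠ 0) (hq : q ≠ 0)
    (hcop : ∀ n k : ℤ, n ≠ 0 → k ≠ 0 → IsCoprime (substPow n p) (substPow k q))
    (a b : F) (ha : a ≠ 0) (hb : b ≠ 0) :
    ∀ d : AddMonoidAlgebra ℚ F, d ∣ substElt a p → d ∣ substElt b q → IsUnit d := by
  classical
  intro d hdP hdQ
  set e : Module.Basis (Module.Free.ChooseBasisIndex ℤ F) ℤ F := Module.Free.chooseBasis ℤ F with he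
  haveI : UniqueSums F :=
    UniqueSums.of_injective_addHom e.repr.toLinearMap.toAddMonoidHom.toAddHom
      e.repr.injective inferInstance
  -- injectivity of z ↦ z • a
  have hsmul_inj : Function.Injective (fun z : ℤ => z • a) := by
    intro z z' h
    have h2 : (z - z') • a = 0 := by
      rw [sub_smul, sub_eq_zero]; exact h
    rcases smul_eq_zero.mp h2 with h3 | h3
    · omega
    · exact absurd h3 ha
  have hPne : substElt a p ≠ 0 := by
    intro h
    apply hp
    have h0 : Finsupp.mapDomain (fun z : ℤ => z • a) (toF p)
        = Finsupp.mapDomain (fun z : ℤ => z • a) (toF (0 : LaurentPolynomial ℚ)) := by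
      rw [show toF (0 : LaurentPolynomial ℚ) = 0 from rfl, Finsupp.mapDomain_zero]
      exact AddMonoidAlgebra.ofCoeff_eq_zero.mp h
    exact AddMonoidAlgebra.coeff_injective (Finsupp.mapDomain_injective hsmul_inj h0)
  obtain ⟨dd, hdd⟩ := hdP
  have hd0 : d ≠ 0 := by rintro rfl; exact hPne (by rw [hdd, zero_mul])
  have hdd0 : dd ≠ 0 := by rintro rfl; exact hPne (by rw [hdd, mul_zero])
  -- support of substElt a p is in the direction of a
  have hsupp : ∀ g ∈ (substElt a p).coeff.support, ∃ z : ℤ, g = z • a := by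
    intro g hg
    have h1 := Finsupp.mapDomain_support (f := fun z : ℤ => z • a) (s := toF p) hg
    obtain ⟨z, _, rfl⟩ := Finset.mem_image.mp h1
    exact ⟨z, rfl⟩
  set A : Module.Free.ChooseBasisIndex ℤ F →₀ ℤ := e.repr a with hA
  have hAne : A ≠ 0 := by
    intro h
    exact ha (by simpa using e.repr.injective (by rw [← hA, h]; simp))
  obtain ⟨i0, hi0⟩ : ∃ i, A i ≠ 0 := by
    by_contra hcon
    push_neg at hcon
    exact hAne (Finsupp.ext fun i => hcon i)
  set coord : Module.Free.ChooseBasisIndex ℤ F → (F →+ ℤ) := fun i =>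
    (Finsupp.applyAddHom i).comp e.repr.toLinearMap.toAddMonoidHom with hcoorddef
  have hcoord : ∀ i x, coord i x = e.repr x i := fun _ _ => rfl
  -- key relation on the support of d
  have hrel : ∀ g ∈ d.coeff.support, ∀ g' ∈ d.coeff.support, ∀ j,
      (A i0) * (e.repr g j - e.repr g' j) = (A j) * (e.repr g i0 - e.repr g' i0) := by
    intro g hg g' hg' j
    set φ : F →+ ℤ := (A i0) • coord j - (A j) • coord i0 with hφ
    have hφapp : ∀ x, φ x = (A i0) * (e.repr x j) - (A j) * (e.repr x i0) := by
      intro x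
      rw [hφ]
      simp [AddMonoidHom.sub_apply, hcoord, smul_eq_mul]
    have hφa : φ a = 0 := by rw [hφapp]; rw [← hA]; ring
    have hc : ∀ g ∈ (d * dd).coeff.support, φ g = 0 := by
      intro g hgm
      rw [← hdd] at hgm
      obtain ⟨z, rfl⟩ := hsupp g hgm
      rw [map_zsmul, hφa, smul_zero]
    obtain ⟨m, hm⟩ := const_on_support hd0 hdd0 φ hc
    have heq := (hm g hg).trans (hm g' hg').symm
    rw [hφapp, hφapp] at heq
    ring_nf
    ring_nf at heq
    omega
  -- support of d lies on a line in direction a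
  have hline : ∀ g ∈ d.coeff.support, ∀ g' ∈ d.coeff.support,
      (A i0) • (g - g') = (e.repr g i0 - e.repr g' i0) • a := by
    intro g hg g' hg'
    apply e.repr.injective
    rw [map_zsmul, map_zsmul, map_sub]
    ext j
    have h1 := hrel g hg g' hg' j
    simp only [Finsupp.smul_apply, Finsupp.sub_apply, smul_eq_mul]
    rw [← hA] at *
    nlinarith [h1]
  -- a functional nonzero on both a and b
  obtain ⟨ψ, hψa, hψb⟩ : ∃ ψ : F →+ ℤ, ψ a ≠ 0 ∧ ψ b ≠ 0 := by
    obtain ⟨j0, hj0⟩ : ∃ j, e.repr b j ≠ 0 := by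
      by_contra hcon
      push_neg at hcon
      exact hb (by simpa using e.repr.injective (by ext j; simpa using hcon j))
    by_cases h1 : e.repr b i0 ≠ 0
    · exact ⟨coord i0, by rw [hcoord]; exact hi0, by rw [hcoord]; exact h1⟩
    · push_neg at h1
      by_cases h2 : e.repr a j0 ≠ 0
      · exact ⟨coord j0, by rw [hcoord]; exact h2, by rw [hcoord]; exact hj0⟩
      · push_neg at h2
        refine ⟨coord i0 + coord j0, ?_, ?_⟩
        · rw [AddMonoidHom.add_apply, hcoord, hcoord, h2, add_zero]; exact hi0
        · rw [AddMonoidHom.add_apply, hcoord, hcoord, h1, zero_add]; exact hj0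
  -- ψ is injective on the support of d
  have hinj : Set.InjOn ψ d.coeff.support := by
    intro g hg g' hg' hψeq
    have h1 := hline g (Finset.mem_coe.mp hg) g' (Finset.mem_coe.mp hg')
    have h2 := congrArg ψ h1
    rw [map_zsmul, map_zsmul, map_sub, hψeq, sub_self, smul_zero] at h2
    have h3 : e.repr g i0 - e.repr g' i0 = 0 := by
      rcases smul_eq_zero.mp h2.symm with h | h
      · exact h
      · exact absurd h hψa
    rw [h3, zero_smul] at h1
    have h4 : g - g' = 0 := by
      rcases smul_eq_zero.mp h1 with h | h
      · exact absurd h hi0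
      · exact h
    exact sub_eq_zero.mp h4
  set Ψ := AddMonoidAlgebra.mapDomainRingHom ℚ ψ with hΨdef
  have hΨP : Ψ (substElt a p) = substPow (ψ a) p := by
    show AddMonoidAlgebra.ofCoeff (Finsupp.mapDomain ψ (Finsupp.mapDomain (fun z : ℤ => z • a) (toF p)))
      = AddMonoidAlgebra.ofCoeff (Finsupp.mapDomain (fun i => (ψ a) * i) (toF p))
    rw [← Finsupp.mapDomain_comp]
    congr 2
    funext z
    simp only [Function.comp_apply, map_zsmul, smul_eq_mul]
    ring
  have hΨQ : Ψ (substElt b q) = substPow (ψ b) q := by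
    show AddMonoidAlgebra.ofCoeff (Finsupp.mapDomain ψ (Finsupp.mapDomain (fun z : ℤ => z • b) (toF q)))
      = AddMonoidAlgebra.ofCoeff (Finsupp.mapDomain (fun i => (ψ b) * i) (toF q))
    rw [← Finsupp.mapDomain_comp]
    congr 2
    funext z
    simp only [Function.comp_apply, map_zsmul, smul_eq_mul]
    ring
  have hcop' : IsCoprime (substPow (ψ a) p) (substPow (ψ b) q) := hcop _ _ hψa hψb
  have hu : IsUnit (Ψ d) := by
    apply hcop'.isUnit_of_dvd'
    · rw [← hΨP]; exact map_dvd Ψ ⟨dd, hdd⟩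
    · rw [← hΨQ]; exact map_dvd Ψ hdQ
  obtain ⟨v, hv⟩ := hu.exists_right_inv
  have hu0 : Ψ d ≠ 0 := left_ne_zero_of_mul_eq_one hv
  have hv0 : v ≠ 0 := right_ne_zero_of_mul_eq_one hv
  have hone : ∀ g ∈ ((Ψ d) * v).coeff.support, (AddMonoidHom.id ℤ) g = 0 := by
    rw [hv]
    intro g hg
    have hsupp1 : (1 : AddMonoidAlgebra ℚ ℤ).coeff.support = {0} := by
      rw [AddMonoidAlgebra.one_def]
      exact Finsupp.support_single_ne_zero _ one_ne_zero
    rw [hsupp1] at hg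
    simpa using hg
  obtain ⟨m, hm⟩ := const_on_support (G := ℤ) hu0 hv0 (AddMonoidHom.id ℤ) hone
  have hcard : (Ψ d).coeff.support.card = 1 := by
    have hsing : (Ψ d).coeff.support ⊆ {m} := fun g hg => Finset.mem_singleton.mpr (hm g hg)
    have h1 : (Ψ d).coeff.support.Nonempty := Finsupp.support_nonempty_iff.mpr (mt AddMonoidAlgebra.coeff_eq_zero.mp hu0)
    have h2 := Finset.card_le_card hsing
    have h3 := Finset.card_pos.mpr h1
    simp only [Finset.card_singleton] at h2
    omega
  have hΨd : (Ψ d).coeff = Finsupp.mapDomain ψ d.coeff := rfl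
  have hdcard : d.coeff.support.card = 1 := by
    rw [hΨd, Finsupp.mapDomain_support_of_injOn d.coeff hinj,
      Finset.card_image_of_injOn hinj] at hcard
    exact hcard
  obtain ⟨g0, hg0ne, hd_eq⟩ := Finsupp.card_support_eq_one.mp hdcard
  rw [← AddMonoidAlgebra.ofCoeff_coeff d, hd_eq]
  have h9 : (AddMonoidAlgebra.single g0 (d.coeff g0)) * (AddMonoidAlgebra.single (-g0) (d.coeff g0)⁻¹)
      = (1 : AddMonoidAlgebra ℚ F) := by
    rw [AddMonoidAlgebra.single_mul_single, add_neg_cancel, mul_inv_cancel₀ hg0ne]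
    exact (AddMonoidAlgebra.one_def).symm
  exact IsUnit.of_mul_eq_one _ h9
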